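/- Let n ≥ 3, y ∈ ℝⁿ, a, b ∈ ℝⁿ, λ ∈ ℝ, and let A ∈ ℝ^{n×n} be skew-symmetric. Define the vector field w(x) := a + A(x−y) + λ(x−y) + ⟨b, x−y⟩(x−y) − (1/2)|x−y|² b. Then l(w) = 0, i.e., the trace-free part of the symmetric part of the differential matrix of w vanishes identically. -/

import Mathlib

open MeasureTheory Metric Set Matrix
open scoped BigOperators ENNReal

noncomputable section

abbrev Euc (n : ℕ) := EuclideanSpace ℝ (Fin n)

/-- Differential matrix `(Dv)_{ij} = ∂v_i/∂x_j` (computed via the Fréchet derivative). -/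
def Dmat {n : ℕ} (v : Euc n → Euc n) (x : Euc n) : Matrix (Fin n) (Fin n) ℝ :=
  fun i j => fderiv ℝ v x (EuclideanSpace.single j 1) i

/-- Symmetric part of the differential matrix. -/
def epsMat {n : ℕ} (v : Euc n → Euc n) (x : Euc n) : Matrix (Fin n) (Fin n) ℝ :=
  (1 / 2 : ℝ) • (Dmat v x + (Dmat v x)ᵀ)

/-- Trace-free part of the symmetric part of the differential matrix. -/
def lMat {n : ℕ} (v : Euc n → Euc n) (x : Euc n) : Matrix (Fin n) (Fin n) ℝ :=
  epsMat v x - (Matrix.trace (Dmat v x) / (n : ℝ)) • (1 : Matrix (Fin n) (Fin n) ℝ)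

/-- Frobenius (Euclidean) norm of a matrix. -/
def matNorm {n : ℕ} (M : Matrix (Fin n) (Fin n) ℝ) : ℝ :=
  Real.sqrt (∑ i, ∑ j, (M i j) ^ 2)

/-- `M : N = Σ_{ij} M_{ij} N_{ij}`. -/
def matDot {n : ℕ} (M N : Matrix (Fin n) (Fin n) ℝ) : ℝ := ∑ i, ∑ j, M i j * N i j

/-- Distance to the boundary of `Ω`. -/
def distBd {n : ℕ} (Ω : Set (Euc n)) (x : Euc n) : ℝ := Metric.infDist x (frontier Ω)

/-- Open axis-parallel cube with center `c` and side length `h`. -/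
def openCube {n : ℕ} (c : Euc n) (h : ℝ) : Set (Euc n) := {x | ∀ i, |x i - c i| < h / 2}

/-- Closed axis-parallel cube with center `c` and side length `h`. -/
def closedCube {n : ℕ} (c : Euc n) (h : ℝ) : Set (Euc n) := {x | ∀ i, |x i - c i| ≤ h / 2}

/-- Bounded John domain: there are `C > 1` and a distinguished point `x₀ ∈ Ω` such that
every point of `Ω` is joined to `x₀` by a rectifiable curve, parameterized by arc length
(hence 1-Lipschitz), along which the distance to the boundary grows linearly. -/
def IsJohnDomain {n : ℕ} (Ω : Set (Euc n)) : Prop :=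
  ∃ C > (1 : ℝ), ∃ x₀ ∈ Ω, ∀ y ∈ Ω, ∃ L : ℝ, 0 ≤ L ∧ ∃ γ : ℝ → Euc n,
    γ 0 = y ∧ γ L = x₀ ∧ (∀ t ∈ Icc 0 L, γ t ∈ Ω) ∧
    (∀ s ∈ Icc 0 L, ∀ t ∈ Icc 0 L, dist (γ s) (γ t) ≤ |s - t|) ∧
    (∀ t ∈ Icc 0 L, t / C ≤ Metric.infDist (γ t) (frontier Ω))

/-- The matrix-valued functions `H_i`. -/
def Hmat {n : ℕ} (i : Fin n) (z : Euc n) : Matrix (Fin n) (Fin n) ℝ :=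
  fun j k => if j = k then z i else if k = i then z j else if j = i then -z k else 0

/-- The finite-dimensional space `V = D(Σ)`:
`φ(x) = A + λ I + Σ_i b_i H_i(x − y)` with `A` skew-symmetric. -/
def Vset (n : ℕ) : Set (Euc n → Matrix (Fin n) (Fin n) ℝ) :=
  {φ | ∃ (A : Matrix (Fin n) (Fin n) ℝ) (lam : ℝ) (b : Fin n → ℝ) (y : Euc n),
    Aᵀ = -A ∧ ∀ x, φ x = A + lam • (1 : Matrix (Fin n) (Fin n) ℝ) + ∑ i, b i • Hmat i (x - y)}


/-- the fields `w(x) = a + A(x−y) + λ(x−y) + ⟨b,x−y⟩(x−y) − (1/2)|x−y|²b`,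
with `A` skew-symmetric, satisfy `l(w) ≡ 0`. -/
theorem kernel_field_in_ker_l
    (n : ℕ) (hn : 3 ≤ n) (y a b : Euc n) (lam : ℝ)
    (A : Matrix (Fin n) (Fin n) ℝ) (hA : Aᵀ = -A) (w : Euc n → Euc n)
    (hw : ∀ x : Euc n, ∀ j : Fin n,
      w x j = a j + (∑ k, A j k * (x k - y k)) + lam * (x j - y j)
        + (∑ i, b i * (x i - y i)) * (x j - y j)
        - (1 / 2) * (∑ i, (x i - y i) ^ 2) * b j) :
    ∀ x : Euc n, lMat w x = 0 := by
  intro x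
  set P : Fin n → (Euc n →L[ℝ] ℝ) := fun k => EuclideanSpace.proj k with hP
  have hp : ∀ k : Fin n, HasFDerivAt (fun x' : Euc n => x' k - y k) (P k) x :=
    fun k => ((EuclideanSpace.proj (𝕜 := ℝ) k).hasFDerivAt (x := x)).sub_const (y k)
  set s : ℝ := ∑ k, b k * (x k - y k) with hs
  set D' : Fin n → (Euc n →L[ℝ] ℝ) := fun i =>
    (0 : Euc n →L[ℝ] ℝ) + (∑ k, A i k • P k) + lam • P i
      + (s • P i + (x i - y i) • ∑ k, b k • P k)
      - b i • ((1/2 : ℝ) • ∑ k, ((x k - y k) • P k + (x k - y k) • P k)) with hD'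
  have hF : ∀ i : Fin n, HasFDerivAt (fun x' : Euc n => w x' i) (D' i) x := by
    intro i
    have heq : (fun x' : Euc n => w x' i) = fun x' : Euc n =>
        a i + (∑ k, A i k * (x' k - y k)) + lam * (x' i - y i)
        + (∑ k, b k * (x' k - y k)) * (x' i - y i)
        - (1 / 2) * (∑ k, (x' k - y k) ^ 2) * b i := funext fun x' => hw x' i
    rw [heq, hD']
    have h1 : HasFDerivAt (fun x' : Euc n => ∑ k, A i k * (x' k - y k))
        (∑ k, A i k • P k) x := HasFDerivAt.fun_sum fun k _ => (hp k).const_mul (A i k)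
    have h2 : HasFDerivAt (fun x' : Euc n => lam * (x' i - y i)) (lam • P i) x :=
      (hp i).const_mul lam
    have hsd : HasFDerivAt (fun x' : Euc n => ∑ k, b k * (x' k - y k))
        (∑ k, b k • P k) x := HasFDerivAt.fun_sum fun k _ => (hp k).const_mul (b k)
    have h3 := hsd.mul (hp i)
    have hg : HasFDerivAt (fun x' : Euc n => ∑ k, (x' k - y k) ^ 2)
        (∑ k, ((x k - y k) • P k + (x k - y k) • P k)) x :=
      HasFDerivAt.fun_sum fun k _ => by simpa [pow_two] using (hp k).fun_mul (hp k)
    have h4 := (hg.const_mul (1/2 : ℝ)).mul_const (b i)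
    exact ((((hasFDerivAt_const (a i) x).add h1).add h2).add h3).sub h4
  have hdiff : DifferentiableAt ℝ w x :=
    differentiableAt_euclidean.2 fun i => (hF i).differentiableAt
  have hDval : ∀ i j : Fin n, Dmat w x i j
      = A i j + (lam + s) * (if i = j then 1 else 0)
        + b j * (x i - y i) - b i * (x j - y j) := by
    intro i j
    have hcomp : fderiv ℝ (fun x' : Euc n => w x' i) x
        = (EuclideanSpace.proj (𝕜 := ℝ) i).comp (fderiv ℝ w x) := by
      have h := fderiv_comp x ((EuclideanSpace.proj (𝕜 := ℝ) (i : Fin n)).differentiableAt) hdiff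
      rw [ContinuousLinearMap.fderiv] at h
      exact h
    have e1 : Dmat w x i j = fderiv ℝ (fun x' : Euc n => w x' i) x (EuclideanSpace.single j 1) := by
      rw [hcomp]; rfl
    rw [e1, (hF i).fderiv, hD']
    simp only [ContinuousLinearMap.add_apply, ContinuousLinearMap.sub_apply,
      ContinuousLinearMap.smul_apply, ContinuousLinearMap.coe_sum', Finset.sum_apply,
      ContinuousLinearMap.zero_apply, hP, smul_eq_mul]
    simp only [EuclideanSpace.proj, PiLp.proj_apply, EuclideanSpace.single_apply,
      mul_ite, mul_one, mul_zero, ite_mul, zero_mul, Finset.sum_ite_eq', Finset.mem_univ,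
      if_true]
    have hsum2 : ∀ m : Fin n, (∑ k : Fin n,
          ((if k = m then x k - y k else 0) + if k = m then x k - y k else 0))
        = (x m - y m) + (x m - y m) := by
      intro m
      rw [Finset.sum_add_distrib]
      simp only [Finset.sum_ite_eq', Finset.mem_univ, if_true]
    rcases eq_or_ne i j with h | h
    · subst h
      rw [hsum2]
      simp only [if_pos rfl, if_true]
      ring
    · rw [hsum2]
      simp only [if_neg h]
      ring
  have hAdiag : ∀ i, A i i = 0 := by
    intro i
    have h := congrFun (congrFun hA i) i
    simp only [Matrix.transpose_apply, Matrix.neg_apply] at h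
    linarith
  have htr : Matrix.trace (Dmat w x) = n * (lam + s) := by
    rw [Matrix.trace]
    simp only [Matrix.diag_apply, hDval, hAdiag, if_pos rfl]
    simp [Finset.sum_sub_distrib, Finset.sum_add_distrib, mul_comm]
    ring
  have hn0 : (n : ℝ) ≠ 0 := by
    have : (0:ℝ) < n := by exact_mod_cast Nat.lt_of_lt_of_le (by norm_num) hn
    linarith
  ext i j
  simp only [lMat, epsMat, Matrix.sub_apply, Matrix.add_apply, Matrix.smul_apply,
    Matrix.transpose_apply, Matrix.one_apply, Matrix.zero_apply, smul_eq_mul, htr]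
  rw [hDval i j, hDval j i]
  have hAsym : A j i = - A i j := by
    have h := congrFun (congrFun hA i) j
    simpa using h
  rw [hAsym]
  rcases eq_or_ne i j with h | h
  · subst h
    simp
    field_simp
    ring
  · simp [h, Ne.symm h]
    ring


end
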